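/- Let β > 0, c ∈ ℝ, and 0 ≤ a ≤ b ≤ T. Let Δ : ℝ → ℝ be continuous on [0, T] with Δ(0) = 0, differentiable with Δ'(t) = −β·Δ(t) for t in (0,a) ∪ (b,T), and differentiable with Δ'(t) = −β·Δ(t) + c for t in (a,b). Then Δ(T) = (c/β)·(e^{−β(T−b)} − e^{−β(T−a)}). -/

import Mathlib

/-- Exact shifting-phase deviation computation in the proof of Proposition 1:
if `Δ(0) = 0`, `Δ' = -βΔ` outside `(a, b)` and `Δ' = -βΔ + c` on `(a, b)`,
then `Δ(T) = (c/β)·(e^{−β(T−b)} − e^{−β(T−a)})`. -/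
theorem shifting_phase_deviation
    (β c a b T : ℝ) (hβ : 0 < β) (ha : 0 ≤ a) (hab : a ≤ b) (hbT : b ≤ T)
    (Δ : ℝ → ℝ) (hcont : ContinuousOn Δ (Set.Icc 0 T)) (h0 : Δ 0 = 0)
    (hout : ∀ t ∈ Set.Ioo 0 a ∪ Set.Ioo b T, HasDerivAt Δ (-β * Δ t) t)
    (hin : ∀ t ∈ Set.Ioo a b, HasDerivAt Δ (-β * Δ t + c) t) :
    Δ T = c / β * (Real.exp (-β * (T - b)) - Real.exp (-β * (T - a))) := by
  set g : ℝ → ℝ := fun t => Δ t * Real.exp (β * t) with hg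
  have haT : a ≤ T := hab.trans hbT
  have h0b : (0:ℝ) ≤ b := ha.trans hab
  have hgcont : ContinuousOn g (Set.Icc 0 T) :=
    hcont.mul ((Real.continuous_exp.comp (continuous_const.mul continuous_id)).continuousOn)
  have hderiv : ∀ t d, HasDerivAt Δ d t →
      HasDerivAt g ((d + β * Δ t) * Real.exp (β * t)) t := by
    intro t d hd
    have he : HasDerivAt (fun t => Real.exp (β * t)) (β * Real.exp (β * t)) t := by
      have := ((hasDerivAt_id t).const_mul β).exp
      simpa [mul_comm] using this
    have := hd.mul he
    exact this.congr_deriv (by ring)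
  -- g is "constant" on [0,a]: g a - g 0 = 0
  have key : ∀ u v : ℝ, 0 ≤ u → v ≤ T → u ≤ v →
      (∀ t ∈ Set.Ioo u v, HasDerivAt g 0 t) → g v = g u := by
    intro u v hu hv huv hder
    have := intervalIntegral.integral_eq_sub_of_hasDeriv_right_of_le huv
      (hgcont.mono (Set.Icc_subset_Icc hu hv))
      (fun t ht => (hder t ht).hasDerivWithinAt)
      (intervalIntegrable_const (c := (0:ℝ)))
    simp at this
    linarith [this]
  have h1 : g a = 0 := by
    have := key 0 a le_rfl haT ha (fun t ht => by
      have hd := hderiv t _ (hout t (Or.inl ht))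
      simpa using hd.congr_deriv (by ring))
    simpa [hg, h0] using this
  have h3 : g T = g b := key b T h0b le_rfl hbT (fun t ht => by
    have hd := hderiv t _ (hout t (Or.inr ht))
    simpa using hd.congr_deriv (by ring))
  -- middle
  have hmid : g b - g a = ∫ t in a..b, c * Real.exp (β * t) := by
    have := intervalIntegral.integral_eq_sub_of_hasDeriv_right_of_le (f := g)
      (f' := fun t => c * Real.exp (β * t)) hab
      (hgcont.mono (Set.Icc_subset_Icc ha hbT))
      (fun t ht => by
        have hd := hderiv t _ (hin t ht)
        exact (hd.congr_deriv (by ring)).hasDerivWithinAt)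
      ((continuous_const.mul (Real.continuous_exp.comp (continuous_const.mul continuous_id))).intervalIntegrable a b)
    linarith [this]
  have hint : (∫ t in a..b, c * Real.exp (β * t))
      = c / β * Real.exp (β * b) - c / β * Real.exp (β * a) := by
    have := intervalIntegral.integral_eq_sub_of_hasDerivAt (a := a) (b := b)
      (f := fun t => c / β * Real.exp (β * t)) (f' := fun t => c * Real.exp (β * t))
      (fun t ht => by
        have he : HasDerivAt (fun t => Real.exp (β * t)) (β * Real.exp (β * t)) t := by
          have := ((hasDerivAt_id t).const_mul β).exp
          simpa [mul_comm] using this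
        have := he.const_mul (c / β)
        exact this.congr_deriv (by field_simp))
      ((continuous_const.mul (Real.continuous_exp.comp (continuous_const.mul continuous_id))).intervalIntegrable a b)
    simpa using this
  have hgT : g T = c / β * Real.exp (β * b) - c / β * Real.exp (β * a) := by
    rw [h3]; linarith [hmid, hint, h1]
  have hexp : Real.exp (β * T) ≠ 0 := Real.exp_ne_zero _
  have : Δ T = (c / β * Real.exp (β * b) - c / β * Real.exp (β * a)) / Real.exp (β * T) := by
    field_simp [hg] at hgT ⊢
    linarith [hgT]
  rw [this]
  rw [mul_sub, show -β * (T - b) = β * b - β * T by ring, show -β * (T - a) = β * a - β * T by ring,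
    Real.exp_sub, Real.exp_sub]
  field_simp
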